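/- Fix an integer t ≥ 2. For each integer k ≥ 1 define AE(k,t) = max{α_{t−1}(G) − eq_t(G) : G a connected finite simple graph with exactly k vertices} and M(k) = max{α_{t−1}(G) : G a connected finite simple graph with exactly k vertices}. Then there exists a real number L such that AE(k,t)/k → L and M(k)/k → L as k → ∞. -/

import Mathlib

open SimpleGraph

/-- `S` is a `t`-equidistant set of `G`: all distinct vertices of `S` are at distance
exactly `t` in `G`. -/
def IsEquidistantSet {V : Type*} (G : SimpleGraph V) (t : ℕ) (S : Finset V) : Prop :=
  (S : Set V).Pairwise fun u v => G.dist u v = t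

/-- The `t`-equidistant number of `G`: the maximum size of a `t`-equidistant set. -/
noncomputable def eqNum {V : Type*} [Fintype V] (G : SimpleGraph V) (t : ℕ) : ℕ :=
  sSup {n : ℕ | ∃ S : Finset V, IsEquidistantSet G t S ∧ S.card = n}

/-- `S` is a `t`-independent set of `G`: all distinct vertices of `S` are at pairwise
distance greater than `t` in `G`. -/
def IsTIndepSet {V : Type*} (G : SimpleGraph V) (t : ℕ) (S : Finset V) : Prop :=
  (S : Set V).Pairwise fun u v => t < G.dist u v

/-- The `t`-independence number of `G`. -/
noncomputable def indepNumT {V : Type*} [Fintype V] (G : SimpleGraph V) (t : ℕ) : ℕ :=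
  sSup {n : ℕ | ∃ S : Finset V, IsTIndepSet G t S ∧ S.card = n}

/-- The equidistant number of `G`: `max {eq_t(G) : 1 ≤ t ≤ diam G}`. -/
noncomputable def eqTotalNum {V : Type*} [Fintype V] (G : SimpleGraph V) : ℕ :=
  (Finset.Icc 1 G.diam).sup (eqNum G)



section General
variable {V : Type*} {G : SimpleGraph V}

lemma lip_walk (f : V → ℕ) (hf : ∀ a b, G.Adj a b → f b ≤ f a + 1) {x y : V}
    (w : G.Walk x y) : f y ≤ f x + w.length := by
  induction w with
  | nil => simp
  | @cons a b c h p ih =>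
      calc f c ≤ f b + p.length := ih
        _ ≤ (f a + 1) + p.length := by gcongr; exact hf _ _ h
        _ = f a + (Walk.cons h p).length := by simp [Walk.length_cons]; ring

lemma dist_lower (hconn : G.Connected) (f : V → ℕ) (hf : ∀ a b, G.Adj a b → f b ≤ f a + 1)
    {x y : V} (hx : f x = 0) : f y ≤ G.dist x y := by
  obtain ⟨p, hp⟩ := hconn.exists_walk_length_eq_dist x y
  simpa [hx, hp] using lip_walk f hf p

lemma exists_walk_to_getVert {u v : V} (p : G.Walk u v) (i : ℕ) :
    ∃ q : G.Walk u (p.getVert i), q.length ≤ i := by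
  induction p generalizing i with
  | nil => exact ⟨Walk.nil, by simp⟩
  | @cons a b c h p ih =>
      cases i with
      | zero =>
          rw [Walk.getVert_zero]
          exact ⟨Walk.nil, by simp⟩
      | succ i =>
          obtain ⟨q, hq⟩ := ih i
          rw [Walk.getVert_cons_succ]
          exact ⟨Walk.cons h q, by simpa using Nat.succ_le_succ hq⟩

lemma exists_walk_from_getVert {u v : V} (p : G.Walk u v) (i : ℕ) :
    ∃ q : G.Walk (p.getVert i) v, q.length ≤ p.length - i := by
  induction p generalizing i with
  | nil => exact ⟨Walk.nil, by simp⟩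
  | @cons a b c h p ih =>
      cases i with
      | zero =>
          rw [Walk.getVert_zero]
          exact ⟨Walk.cons h p, by simp⟩
      | succ i =>
          obtain ⟨q, hq⟩ := ih i
          rw [Walk.getVert_cons_succ]
          exact ⟨q, by simpa [Walk.length_cons] using hq⟩

lemma exists_dist_eq_cat (hconn : G.Connected) {u v : V} {i : ℕ} (hi : i ≤ G.dist u v) :
    ∃ w : V, G.dist u w = i := by
  obtain ⟨p, hp⟩ := hconn.exists_walk_length_eq_dist u v
  refine ⟨p.getVert i, le_antisymm ?_ ?_⟩
  · obtain ⟨q, hq⟩ := exists_walk_to_getVert p i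
    exact (SimpleGraph.dist_le q).trans hq
  · obtain ⟨q, hq⟩ := exists_walk_from_getVert p i
    have h1 := hconn.dist_triangle (u := u) (v := p.getVert i) (w := v)
    have h2 : G.dist (p.getVert i) v ≤ p.length - i := (SimpleGraph.dist_le q).trans hq
    omega

lemma ball_card_lower [Fintype V] [DecidableEq V] (hconn : G.Connected) (v : V) (r : ℕ)
    (h : ∃ w : V, r ≤ G.dist v w) :
    r + 1 ≤ (Finset.univ.filter (fun u => G.dist v u ≤ r)).card := by
  obtain ⟨w, hw⟩ := h
  have : ∀ i : ℕ, i ≤ r → ∃ u : V, G.dist v u = i := fun i hi =>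
    exists_dist_eq_cat hconn (le_trans hi hw)
  choose g hg using this
  have : Finset.card (Finset.image (fun i : Fin (r+1) => g i.1 (Nat.lt_succ_iff.mp i.2))
      Finset.univ) = r + 1 := by
    rw [Finset.card_image_of_injective _ ?_, Finset.card_univ, Fintype.card_fin]
    intro i j hij
    apply Fin.ext
    have h1 := hg i.1 (Nat.lt_succ_iff.mp i.2)
    have h2 := hg j.1 (Nat.lt_succ_iff.mp j.2)
    simp only [] at hij
    rw [← h1, ← h2, hij]
  rw [← this]
  apply Finset.card_le_card
  intro x hx
  simp only [Finset.mem_image] at hx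
  obtain ⟨i, _, rfl⟩ := hx
  simp only [Finset.mem_filter, Finset.mem_univ, true_and, hg i.1 (Nat.lt_succ_iff.mp i.2)]
  exact Nat.lt_succ_iff.mp i.2

section Plumbing
variable {V : Type*} {G : SimpleGraph V}

lemma isTIndepSet_empty (G : SimpleGraph V) (r : ℕ) : IsTIndepSet G r (∅ : Finset V) := by
  simp [IsTIndepSet]

lemma isEquidistantSet_empty (G : SimpleGraph V) (t : ℕ) :
    IsEquidistantSet G t (∅ : Finset V) := by
  simp [IsEquidistantSet]

lemma indepNumT_bddAbove [Fintype V] (G : SimpleGraph V) (r : ℕ) :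
    BddAbove {n : ℕ | ∃ S : Finset V, IsTIndepSet G r S ∧ S.card = n} := by
  refine ⟨Fintype.card V, ?_⟩
  rintro n ⟨S, _, rfl⟩
  exact S.card_le_univ.trans_eq (by simp)

lemma le_indepNumT [Fintype V] {r : ℕ} {S : Finset V} (hS : IsTIndepSet G r S) :
    S.card ≤ indepNumT G r :=
  le_csSup (indepNumT_bddAbove G r) ⟨S, hS, rfl⟩

lemma indepNumT_le_of [Fintype V] {r b : ℕ}
    (h : ∀ S : Finset V, IsTIndepSet G r S → S.card ≤ b) : indepNumT G r ≤ b := by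
  have hne : {n : ℕ | ∃ S : Finset V, IsTIndepSet G r S ∧ S.card = n}.Nonempty :=
    ⟨0, ∅, isTIndepSet_empty G r, by simp⟩
  refine csSup_le hne ?_
  rintro n ⟨S, hS, rfl⟩
  exact h S hS

lemma eqNum_le_of [Fintype V] {t b : ℕ}
    (h : ∀ S : Finset V, IsEquidistantSet G t S → S.card ≤ b) : eqNum G t ≤ b := by
  have hne : {n : ℕ | ∃ S : Finset V, IsEquidistantSet G t S ∧ S.card = n}.Nonempty :=
    ⟨0, ∅, isEquidistantSet_empty G t, by simp⟩
  refine csSup_le hne ?_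
  rintro n ⟨S, hS, rfl⟩
  exact h S hS

end Plumbing

section Packing
variable {V : Type*} {G : SimpleGraph V}

lemma packing [Fintype V] [DecidableEq V] (hconn : G.Connected) {t ℓ : ℕ}
    (hℓ1 : 1 ≤ ℓ) (hℓt : 2 * ℓ ≤ t + 1) (ht : 2 ≤ t) {S : Finset V}
    (hS : IsTIndepSet G (t - 1) S) (h2 : 2 ≤ S.card) :
    S.card * ℓ ≤ Fintype.card V := by
  classical
  set B : V → Finset V := fun v => Finset.univ.filter (fun u => G.dist v u ≤ ℓ - 1) with hB
  have hdisj : ∀ v ∈ S, ∀ v' ∈ S, v ≠ v' → Disjoint (B v) (B v') := by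
    intro v hv v' hv' hne
    rw [Finset.disjoint_left]
    intro u hu hu'
    simp only [hB, Finset.mem_filter] at hu hu'
    have htri := hconn.dist_triangle (u := v) (v := u) (w := v')
    have h1 : G.dist u v' = G.dist v' u := SimpleGraph.dist_comm ..
    have hlt := hS (Finset.mem_coe.mpr hv) (Finset.mem_coe.mpr hv') hne
    omega
  have hcard : ∀ v ∈ S, ℓ ≤ (B v).card := by
    intro v hv
    obtain ⟨v', hv', hne⟩ := Finset.exists_mem_ne (s := S) (by omega) v
    have hlt := hS (Finset.mem_coe.mpr hv) (Finset.mem_coe.mpr hv') (Ne.symm hne)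
    have : ℓ - 1 ≤ G.dist v v' := by omega
    have := ball_card_lower hconn v (ℓ - 1) ⟨v', this⟩
    simpa [hB, Nat.sub_add_cancel hℓ1] using this
  calc S.card * ℓ = ∑ _v ∈ S, ℓ := by rw [Finset.sum_const, smul_eq_mul]
    _ ≤ ∑ v ∈ S, (B v).card := Finset.sum_le_sum hcard
    _ = (S.biUnion B).card := (Finset.card_biUnion hdisj).symm
    _ ≤ (Finset.univ : Finset V).card := Finset.card_le_univ _
    _ = Fintype.card V := by simp

lemma indepNumT_mul_le [Fintype V] [DecidableEq V] (hconn : G.Connected) {t ℓ : ℕ}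
    (hℓ1 : 1 ≤ ℓ) (hℓt : 2 * ℓ ≤ t + 1) (ht : 2 ≤ t) :
    indepNumT G (t - 1) * ℓ ≤ Fintype.card V + ℓ := by
  have h : indepNumT G (t - 1) ≤ (Fintype.card V + ℓ) / ℓ := by
    apply indepNumT_le_of
    intro S hS
    rw [Nat.le_div_iff_mul_le hℓ1]
    rcases le_or_gt S.card 1 with h1 | h1
    · calc S.card * ℓ ≤ 1 * ℓ := by gcongr
        _ ≤ Fintype.card V + ℓ := by omega
    · exact (packing hconn hℓ1 hℓt ht hS h1).trans (by omega)
  calc indepNumT G (t - 1) * ℓ ≤ ((Fintype.card V + ℓ) / ℓ) * ℓ := by gcongr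
    _ ≤ Fintype.card V + ℓ := Nat.div_mul_le_self _ _

end Packing

section Caterpillar

/-- Vertex type of the caterpillar: a spine `Fin P` plus, for each of the first `s`
spine positions, `s` legs which are paths with `ℓ` vertices. -/
abbrev CatV (s P ℓ : ℕ) := Fin P ⊕ (Fin s × Fin s × Fin ℓ)

namespace Cat

/-- natural distance -/
def nd (a b : ℕ) : ℕ := (a - b) + (b - a)

variable {s P ℓ : ℕ}

/-- index along the spine -/
def idx : CatV s P ℓ → ℕ
  | Sum.inl i => i
  | Sum.inr (c, _, _) => c

/-- depth (distance to the spine) -/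
def dep : CatV s P ℓ → ℕ
  | Sum.inl _ => 0
  | Sum.inr (_, _, j) => (j : ℕ) + 1

/-- The tree metric of the caterpillar. -/
def D : CatV s P ℓ → CatV s P ℓ → ℕ
  | Sum.inl i, Sum.inl i' => nd i i'
  | Sum.inl i, Sum.inr (c, _, j) => ((j : ℕ) + 1) + nd i c
  | Sum.inr (c, _, j), Sum.inl i => ((j : ℕ) + 1) + nd i c
  | Sum.inr (c, a, j), Sum.inr (c', a', j') =>
      if c = c' ∧ a = a' then nd j j' else ((j : ℕ) + 1) + ((j' : ℕ) + 1) + nd c c'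

lemma D_self (x : CatV s P ℓ) : D x x = 0 := by
  rcases x with i | ⟨c, a, j⟩ <;> simp [D, nd]

lemma D_comm (x y : CatV s P ℓ) : D x y = D y x := by
  rcases x with i | ⟨c, a, j⟩ <;> rcases y with i' | ⟨c', a', j'⟩ <;> simp only [D, nd]
  · omega
  · by_cases h1 : c = c' ∧ a = a'
    · obtain ⟨rfl, rfl⟩ := h1
      rw [if_pos (⟨rfl, rfl⟩ : c = c ∧ a = a), if_pos (⟨rfl, rfl⟩ : c = c ∧ a = a)]
      omega
    · have h2 : ¬ (c' = c ∧ a' = a) := fun hh => h1 ⟨hh.1.symm, hh.2.symm⟩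
      rw [if_neg h1, if_neg h2]
      omega

lemma D_eq_zero {x y : CatV s P ℓ} (h : D x y = 0) : x = y := by
  rcases x with i | ⟨c, a, j⟩ <;> rcases y with i' | ⟨c', a', j'⟩ <;>
      simp only [D, nd] at h
  · have : (i : ℕ) = i' := by omega
    exact congrArg Sum.inl (Fin.ext this)
  · omega
  · omega
  · split_ifs at h with h1
    · obtain ⟨rfl, rfl⟩ := h1
      have : (j : ℕ) = j' := by omega
      rw [Fin.ext this]
    · omega

lemma D_triangle (x y z : CatV s P ℓ) : D x z ≤ D x y + D y z := by
  rcases x with i | ⟨c, a, j⟩ <;> rcases y with i' | ⟨c', a', j'⟩ <;>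
      rcases z with i'' | ⟨c'', a'', j''⟩ <;> simp only [D, nd]
  · omega
  · omega
  · omega
  · split_ifs with h1
    · obtain ⟨rfl, rfl⟩ := h1; omega
    · omega
  · omega
  · split_ifs with h1
    · obtain ⟨rfl, rfl⟩ := h1; omega
    · omega
  · split_ifs with h1
    · obtain ⟨rfl, rfl⟩ := h1; omega
    · omega
  · by_cases hxy : c = c' ∧ a = a'
    · obtain ⟨rfl, rfl⟩ := hxy
      by_cases hyz : c = c'' ∧ a = a''
      · obtain ⟨rfl, rfl⟩ := hyz
        have hcc : c = c ∧ a = a := ⟨rfl, rfl⟩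
        rw [if_pos hcc, if_pos hcc, if_pos hcc]
        omega
      · rw [if_neg hyz, if_neg hyz, if_pos (⟨rfl, rfl⟩ : c = c ∧ a = a)]
        omega
    · by_cases hyz : c' = c'' ∧ a' = a''
      · obtain ⟨rfl, rfl⟩ := hyz
        rw [if_neg hxy, if_neg hxy, if_pos (⟨rfl, rfl⟩ : c' = c' ∧ a' = a')]
        omega
      · rw [if_neg hxy, if_neg hyz]
        by_cases hxz : c = c'' ∧ a = a''
        · obtain ⟨rfl, rfl⟩ := hxz
          rw [if_pos (⟨rfl, rfl⟩ : c = c ∧ a = a)]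
          omega
        · rw [if_neg hxz]
          omega

/-- The caterpillar graph. -/
def catG (s P ℓ : ℕ) : SimpleGraph (CatV s P ℓ) where
  Adj x y := D x y = 1
  symm := by
    refine ⟨fun x y h => ?_⟩
    change D y x = 1
    rw [D_comm]
    exact h
  loopless := by
    refine ⟨fun x h => ?_⟩
    change D x x = 1 at h
    rw [D_self] at h
    exact one_ne_zero h.symm

lemma catG_adj {x y : CatV s P ℓ} : (catG s P ℓ).Adj x y ↔ D x y = 1 := Iff.rfl

variable (hsP : s ≤ P)

lemma exists_step (hsP : s ≤ P) (x y : CatV s P ℓ) (h : D x y ≠ 0) :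
    ∃ y' : CatV s P ℓ, D y y' = 1 ∧ D x y' + 1 = D x y := by
  rcases y with i | ⟨c, a, j⟩
  · rcases x with i' | ⟨c', a', j'⟩
    · have hne : (i : ℕ) ≠ (i' : ℕ) := fun hh => h (by simp [D, nd, hh])
      rcases Nat.lt_or_ge (i : ℕ) (i' : ℕ) with hlt | hge
      · refine ⟨Sum.inl ⟨(i : ℕ) + 1, lt_of_le_of_lt hlt i'.2⟩, ?_, ?_⟩ <;>
          (simp [D, nd]; try omega)
      · refine ⟨Sum.inl ⟨(i : ℕ) - 1, by omega⟩, ?_, ?_⟩ <;> (simp [D, nd]; try omega)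
    · rcases Nat.lt_or_ge (i : ℕ) (c' : ℕ) with hlt | hge
      · refine ⟨Sum.inl ⟨(i : ℕ) + 1, lt_of_lt_of_le (lt_of_le_of_lt hlt c'.2) hsP⟩, ?_, ?_⟩ <;>
          (simp [D, nd]; try omega)
      · rcases Nat.lt_or_ge (c' : ℕ) (i : ℕ) with hlt2 | hge2
        · refine ⟨Sum.inl ⟨(i : ℕ) - 1, by omega⟩, ?_, ?_⟩ <;> (simp [D, nd]; try omega)
        · have hic : (i : ℕ) = (c' : ℕ) := by omega
          refine ⟨Sum.inr (c', a', ⟨0, lt_of_le_of_lt (Nat.zero_le _) j'.2⟩), ?_, ?_⟩ <;>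
            (simp [D, nd]; try omega)
  · by_cases hx : ∃ j'' : Fin ℓ, x = Sum.inr (c, a, j'')
    · obtain ⟨j'', rfl⟩ := hx
      have hne : (j : ℕ) ≠ (j'' : ℕ) := by
        intro hh
        exact h (by simp [D, nd, hh])
      rcases Nat.lt_or_ge (j : ℕ) (j'' : ℕ) with hlt | hge
      · refine ⟨Sum.inr (c, a, ⟨(j : ℕ) + 1, lt_of_le_of_lt hlt j''.2⟩), ?_, ?_⟩ <;>
          (simp [D, nd]; try omega)
      · refine ⟨Sum.inr (c, a, ⟨(j : ℕ) - 1, by omega⟩), ?_, ?_⟩ <;> (simp [D, nd]; try omega)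
    · rcases Nat.eq_zero_or_pos (j : ℕ) with hj0 | hjpos
      · refine ⟨Sum.inl ⟨(c : ℕ), lt_of_lt_of_le c.2 hsP⟩, ?_, ?_⟩
        · simp [D, nd]; omega
        · rcases x with i' | ⟨c', a', j'⟩
          · simp [D, nd]; omega
          · have hne : ¬ (c' = c ∧ a' = a) := by
              rintro ⟨rfl, rfl⟩
              exact hx ⟨j', rfl⟩
            simp [D, nd, if_neg hne]
            omega
      · refine ⟨Sum.inr (c, a, ⟨(j : ℕ) - 1, by omega⟩), ?_, ?_⟩
        · simp [D, nd]; omega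
        · rcases x with i' | ⟨c', a', j'⟩
          · simp [D, nd]; omega
          · have hne : ¬ (c' = c ∧ a' = a) := by
              rintro ⟨rfl, rfl⟩
              exact hx ⟨j', rfl⟩
            simp [D, nd, if_neg hne]
            omega

lemma exists_walk_le (hsP : s ≤ P) : ∀ (n : ℕ) (x y : CatV s P ℓ), D x y ≤ n →
    ∃ w : (catG s P ℓ).Walk x y, w.length ≤ n := by
  intro n
  induction n with
  | zero =>
      intro x y h
      obtain rfl := D_eq_zero (Nat.le_zero.mp h)
      exact ⟨SimpleGraph.Walk.nil, by simp⟩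
  | succ n ih =>
      intro x y h
      rcases Nat.eq_zero_or_pos (D x y) with h0 | hpos
      · obtain rfl := D_eq_zero h0
        exact ⟨SimpleGraph.Walk.nil, by simp⟩
      · obtain ⟨y', h1, h2⟩ := exists_step hsP x y (by omega)
        obtain ⟨w, hw⟩ := ih x y' (by omega)
        have hadj : (catG s P ℓ).Adj y' y := (catG s P ℓ).adj_symm (catG_adj.mpr h1)
        exact ⟨w.concat hadj, by simp [SimpleGraph.Walk.length_concat]; omega⟩

lemma catG_connected (hs : 1 ≤ s) (hsP : s ≤ P) : (catG s P ℓ).Connected := by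
  rw [SimpleGraph.connected_iff]
  constructor
  · intro x y
    obtain ⟨w, _⟩ := exists_walk_le hsP (D x y) x y le_rfl
    exact ⟨w⟩
  · exact ⟨Sum.inl ⟨0, by omega⟩⟩

lemma dist_eq_D (hs : 1 ≤ s) (hsP : s ≤ P) (x y : CatV s P ℓ) :
    (catG s P ℓ).dist x y = D x y := by
  apply le_antisymm
  · obtain ⟨w, hw⟩ := exists_walk_le hsP (D x y) x y le_rfl
    exact (SimpleGraph.dist_le w).trans hw
  · apply dist_lower (catG_connected hs hsP) (D x)
    · intro u v huv
      have := D_triangle x u v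
      rw [catG_adj.mp huv] at this
      omega
    · exact D_self x

end Cat
end Caterpillar

namespace Cat
variable {s P ℓ : ℕ}

lemma dep_le (v : CatV s P ℓ) : dep v ≤ ℓ := by
  rcases v with i | ⟨c, a, j⟩
  · simp [dep]
  · have := j.2
    simp only [dep]
    omega

lemma leaves_indep {t : ℕ} (hs : 1 ≤ s) (hsP : s ≤ P) (hℓ1 : 1 ≤ ℓ) (hℓt : t ≤ 2 * ℓ) :
    ∃ S : Finset (CatV s P ℓ), IsTIndepSet (catG s P ℓ) (t - 1) S ∧ S.card = s * s := by
  classical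
  refine ⟨Finset.univ.image
    (fun ca : Fin s × Fin s => (Sum.inr (ca.1, ca.2, ⟨ℓ - 1, by omega⟩) : CatV s P ℓ)), ?_, ?_⟩
  · intro x hx y hy hne
    simp only [Finset.coe_image, Set.mem_image] at hx hy
    obtain ⟨⟨cx, ax⟩, -, rfl⟩ := hx
    obtain ⟨⟨cy, ay⟩, -, rfl⟩ := hy
    rw [dist_eq_D hs hsP]
    have hne' : ¬ (cx = cy ∧ ax = ay) := by
      rintro ⟨rfl, rfl⟩
      exact hne rfl
    simp only [D, nd, if_neg hne']
    omega
  · rw [Finset.card_image_of_injective, Finset.card_univ, Fintype.card_prod, Fintype.card_fin]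
    intro u v huv
    simpa [Prod.ext_iff] using huv

lemma eq_bound {t : ℕ} (hs : 1 ≤ s) (hsP : s ≤ P) (ht2 : 2 ≤ t) (hℓ1 : 1 ≤ ℓ)
    (h1 : t ≤ 2 * ℓ) (h2 : 2 * ℓ ≤ t + 1) {S : Finset (CatV s P ℓ)}
    (hS : IsEquidistantSet (catG s P ℓ) t S) : S.card ≤ s + 4 := by
  classical
  have E : ∀ x ∈ S, ∀ y ∈ S, x ≠ y → dep x + dep y + nd (idx x) (idx y) = t := by
    intro x hx y hy hne
    have hD : D x y = t := by
      rw [← dist_eq_D hs hsP]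
      exact hS (Finset.mem_coe.mpr hx) (Finset.mem_coe.mpr hy) hne
    rcases x with i | ⟨c, a, j⟩ <;> rcases y with i' | ⟨c', a', j'⟩
    · simpa [D, dep, idx] using hD
    · simpa [D, dep, idx, nd] using hD
    · simp only [D, nd, dep, idx] at hD ⊢
      omega
    · by_cases hleg : c = c' ∧ a = a'
      · obtain ⟨rfl, rfl⟩ := hleg
        rw [D, if_pos (⟨rfl, rfl⟩ : c = c ∧ a = a)] at hD
        have hj := j.2
        have hj' := j'.2
        simp only [nd] at hD
        omega
      · rw [D, if_neg hleg] at hD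
        simp only [dep, idx, nd] at hD ⊢
        omega
  set Λ := S.filter (fun v => 2 * dep v = t) with hΛ
  have hΛcard : Λ.card ≤ s := by
    have : Λ.card ≤ (Finset.univ : Finset (Fin s)).card := by
      apply Finset.card_le_card_of_injOn
        (fun v => match v with
          | Sum.inl _ => (⟨0, hs⟩ : Fin s)
          | Sum.inr (_, a, _) => a)
        (fun x _ => Finset.mem_univ _)
      intro x hx y hy hf
      simp only [hΛ, Finset.coe_filter, Set.mem_setOf_eq] at hx hy
      obtain ⟨hxS, hxd⟩ := hx
      obtain ⟨hyS, hyd⟩ := hy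
      by_contra hne
      have hE := E x hxS y hyS hne
      have hidx : idx x = idx y := by
        simp only [nd] at hE
        omega
      have hdepx : 1 ≤ dep x := by omega
      have hdepy : 1 ≤ dep y := by omega
      rcases x with i | ⟨c, a, j⟩
      · simp [dep] at hdepx
      rcases y with i' | ⟨c', a', j'⟩
      · simp [dep] at hdepy
      simp only [idx] at hidx
      simp only [dep] at hxd hyd
      simp only [] at hf
      have hc : c = c' := Fin.ext hidx
      have hj : j = j' := Fin.ext (by omega)
      exact hne (by rw [hc, hf, hj])
    simpa using this
  have hTcard : (S.filter (fun v => ¬ 2 * dep v = t)).card ≤ 4 := by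
    set T := S.filter (fun v => ¬ 2 * dep v = t) with hT
    have hTS : ∀ x ∈ T, x ∈ S ∧ ¬ 2 * dep x = t := by
      intro x hx
      simpa [hT] using hx
    have hfib : ∀ n ∈ T.image idx, (T.filter (fun v => idx v = n)).card ≤ 2 := by
      intro n _
      by_contra hlt
      obtain ⟨x, y, z, hx, hy, hz, hxy, hxz, hyz⟩ :=
        (Finset.two_lt_card_iff (s := T.filter (fun v => idx v = n))).mp (by omega)
      simp only [Finset.mem_filter] at hx hy hz
      obtain ⟨hxT, hxn⟩ := hx
      obtain ⟨hyT, hyn⟩ := hy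
      obtain ⟨hzT, hzn⟩ := hz
      have e1 := E x (hTS x hxT).1 y (hTS y hyT).1 hxy
      have e2 := E x (hTS x hxT).1 z (hTS z hzT).1 hxz
      have e3 := E y (hTS y hyT).1 z (hTS z hzT).1 hyz
      have := (hTS x hxT).2
      simp only [nd, hxn, hyn, hzn] at e1 e2 e3
      omega
    have himg : (T.image idx).card ≤ 2 := by
      by_contra hlt
      obtain ⟨n1, n2, n3, hn1, hn2, hn3, h12, h13, h23⟩ :=
        (Finset.two_lt_card_iff (s := T.image idx)).mp (by omega)
      obtain ⟨x, hxT, hxn⟩ := Finset.mem_image.mp hn1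
      obtain ⟨y, hyT, hyn⟩ := Finset.mem_image.mp hn2
      obtain ⟨z, hzT, hzn⟩ := Finset.mem_image.mp hn3
      have hxy : x ≠ y := fun h => h12 (by rw [← hxn, ← hyn, h])
      have hxz : x ≠ z := fun h => h13 (by rw [← hxn, ← hzn, h])
      have hyz : y ≠ z := fun h => h23 (by rw [← hyn, ← hzn, h])
      have e1 := E x (hTS x hxT).1 y (hTS y hyT).1 hxy
      have e2 := E x (hTS x hxT).1 z (hTS z hzT).1 hxz
      have e3 := E y (hTS y hyT).1 z (hTS z hzT).1 hyz
      have d1 := (hTS x hxT).2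
      have d2 := (hTS y hyT).2
      have d3 := (hTS z hzT).2
      rw [hxn] at e1 e2
      rw [hyn] at e3
      simp only [nd, hyn, hzn] at e1 e2 e3
      omega
    calc T.card ≤ 2 * (T.image idx).card := Finset.card_le_mul_card_image T 2 hfib
      _ ≤ 2 * 2 := by omega
      _ = 4 := rfl
  have hsplit := Finset.card_filter_add_card_filter_not
    (s := S) (p := fun v => 2 * dep v = t)
  rw [← hΛ] at hsplit
  omega

end Cat

section Transport
variable {V V' : Type*} {G : SimpleGraph V} {G' : SimpleGraph V'}

lemma iso_dist_eq (φ : G ≃g G') (hG : G.Connected) (u v : V) :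
    G'.dist (φ u) (φ v) = G.dist u v := by
  apply le_antisymm
  · obtain ⟨p, hp⟩ := (hG u v).exists_walk_length_eq_dist
    calc G'.dist (φ u) (φ v) ≤ (p.map φ.toHom).length := SimpleGraph.dist_le _
      _ = G.dist u v := by rw [SimpleGraph.Walk.length_map, hp]
  · obtain ⟨p, hp⟩ := ((hG u v).map φ.toHom).exists_walk_length_eq_dist
    calc G.dist u v
        ≤ ((p.map φ.symm.toHom).copy (by simp) (by simp) : G.Walk u v).length :=
          SimpleGraph.dist_le _
      _ = G'.dist (φ u) (φ v) := by
          rw [SimpleGraph.Walk.length_copy, SimpleGraph.Walk.length_map, hp]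
          rfl

lemma iso_isTIndepSet [DecidableEq V'] (φ : G ≃g G') (hG : G.Connected) {r : ℕ}
    {S : Finset V} (h : IsTIndepSet G r S) : IsTIndepSet G' r (S.image φ) := by
  intro x hx y hy hne
  simp only [Finset.coe_image, Set.mem_image] at hx hy
  obtain ⟨u, hu, rfl⟩ := hx
  obtain ⟨v, hv, rfl⟩ := hy
  rw [iso_dist_eq φ hG]
  exact h hu hv (fun hh => hne (by rw [hh]))

lemma iso_isEquidistantSet [DecidableEq V'] (φ : G ≃g G') (hG : G.Connected) {t : ℕ}
    {S : Finset V} (h : IsEquidistantSet G t S) : IsEquidistantSet G' t (S.image φ) := by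
  intro x hx y hy hne
  simp only [Finset.coe_image, Set.mem_image] at hx hy
  obtain ⟨u, hu, rfl⟩ := hx
  obtain ⟨v, hv, rfl⟩ := hy
  rw [iso_dist_eq φ hG]
  exact h hu hv (fun hh => hne (by rw [hh]))

end Transport

/-- For every decomposition `k = P + s*s*ℓ` there is a connected graph on `Fin k`
with a large `(t-1)`-independent set and small `t`-equidistant sets. -/
lemma exists_good_graph (t ℓ s P k : ℕ) (ht : 2 ≤ t) (hℓ1 : 1 ≤ ℓ)
    (h1 : t ≤ 2 * ℓ) (h2 : 2 * ℓ ≤ t + 1) (hs : 1 ≤ s) (hsP : s ≤ P)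
    (hk : k = P + s * s * ℓ) :
    ∃ G : SimpleGraph (Fin k), G.Connected ∧ s * s ≤ indepNumT G (t - 1) ∧
      eqNum G t ≤ s + 4 := by
  classical
  have hcard : Fintype.card (CatV s P ℓ) = k := by
    simp [CatV, hk, mul_assoc]
  let e : Fin k ≃ CatV s P ℓ := (Fintype.equivFinOfCardEq hcard).symm
  let G : SimpleGraph (Fin k) := (Cat.catG s P ℓ).comap e.toEmbedding
  let φ : G ≃g Cat.catG s P ℓ := SimpleGraph.Iso.comap e (Cat.catG s P ℓ)
  have hcatconn : (Cat.catG s P ℓ).Connected := Cat.catG_connected hs hsP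
  have hGconn : G.Connected := (SimpleGraph.Iso.connected_iff φ).mpr hcatconn
  refine ⟨G, hGconn, ?_, ?_⟩
  · obtain ⟨S₀, hS₀, hcard₀⟩ := Cat.leaves_indep (t := t) hs hsP hℓ1 h1
    have := iso_isTIndepSet φ.symm hcatconn hS₀
    have hc : (S₀.image φ.symm).card = s * s := by
      rw [Finset.card_image_of_injective _ φ.symm.injective, hcard₀]
    calc s * s = (S₀.image φ.symm).card := hc.symm
      _ ≤ indepNumT G (t - 1) := le_indepNumT this
  · apply eqNum_le_of
    intro S hSeq
    have h' := iso_isEquidistantSet φ hGconn hSeq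
    have := Cat.eq_bound hs hsP ht hℓ1 h1 h2 h'
    rwa [Finset.card_image_of_injective _ φ.injective] at this

lemma numerics (ℓ k r m q s : ℕ) (hℓ1 : 1 ≤ ℓ) (hk : (ℓ + 1) * (ℓ + 1) ≤ k)
    (hr : r = Nat.sqrt k) (hm : m = k - r) (hq : q = m / ℓ) (hs : s = Nat.sqrt q) :
    1 ≤ s ∧ s ≤ r ∧ s * s * ℓ + s ≤ k ∧ k ≤ s * s * ℓ + 3 * (ℓ * r) + 2 * ℓ := by
  have hr1 : r * r ≤ k := by rw [hr]; exact Nat.sqrt_le k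
  have hrk : r ≤ k := by rw [hr]; exact Nat.sqrt_le_self k
  have hrl : ℓ + 1 ≤ r := by rw [hr]; exact Nat.le_sqrt.mpr hk
  have hq1 : s * s ≤ q := by rw [hs]; exact Nat.sqrt_le q
  have hq2 : q < (s + 1) * (s + 1) := by rw [hs]; exact Nat.lt_succ_sqrt q
  have hq2' : q ≤ s * s + 2 * s := by
    rw [show (s + 1) * (s + 1) = s * s + 2 * s + 1 from by ring] at hq2
    omega
  have hqm : ℓ * q + m % ℓ = m := by rw [hq]; exact Nat.div_add_mod m ℓ
  have hmod : m % ℓ < ℓ := Nat.mod_lt _ (by omega)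
  have hsr : s ≤ r := by
    rw [hs, hr]
    exact Nat.sqrt_le_sqrt (le_trans (hq ▸ Nat.div_le_self _ _) (hm ▸ Nat.sub_le _ _))
  have hmℓ : ℓ + r ≤ k := by
    calc ℓ + r ≤ ℓ * r + r := by
          have : ℓ * 1 ≤ ℓ * r := Nat.mul_le_mul_left ℓ (by omega)
          omega
      _ = (ℓ + 1) * r := by ring
      _ ≤ r * r := Nat.mul_le_mul_right r hrl
      _ ≤ k := hr1
  have hq0 : 1 ≤ q := by
    rw [hq, Nat.one_le_div_iff (by omega)]
    omega
  have hs1 : 1 ≤ s := by rw [hs]; exact Nat.le_sqrt.mpr (by omega)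
  have h1 : s * s * ℓ ≤ ℓ * q := by
    calc s * s * ℓ = ℓ * (s * s) := by ring
      _ ≤ ℓ * q := Nat.mul_le_mul_left ℓ hq1
  have h2 : ℓ * q ≤ s * s * ℓ + 2 * (ℓ * r) := by
    calc ℓ * q ≤ ℓ * (s * s + 2 * s) := Nat.mul_le_mul_left ℓ hq2'
      _ = s * s * ℓ + 2 * (ℓ * s) := by ring
      _ ≤ s * s * ℓ + 2 * (ℓ * r) := by
          have : ℓ * s ≤ ℓ * r := Nat.mul_le_mul_left ℓ hsr
          omega
  have h3 : r ≤ ℓ * r := Nat.le_mul_of_pos_left r (by omega)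
  exact ⟨hs1, hsr, by omega, by omega⟩

lemma indepNumT_le_card {V : Type*} [Fintype V] (G : SimpleGraph V) (r : ℕ) :
    indepNumT G r ≤ Fintype.card V :=
  indepNumT_le_of (fun S _ => by simpa using S.card_le_univ)

lemma sqrt_atTop : Filter.Tendsto Nat.sqrt Filter.atTop Filter.atTop :=
  Filter.tendsto_atTop_atTop.mpr (fun b => ⟨b * b, fun _ hk => Nat.le_sqrt.mpr hk⟩)

lemma natSqrt_div_tendsto :
    Filter.Tendsto (fun k : ℕ => (Nat.sqrt k : ℝ) / k) Filter.atTop (nhds 0) := by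
  apply tendsto_of_tendsto_of_tendsto_of_le_of_le' tendsto_const_nhds
    (tendsto_one_div_atTop_nhds_zero_nat.comp sqrt_atTop)
  · filter_upwards [Filter.eventually_ge_atTop 1] with k _
    positivity
  · filter_upwards [Filter.eventually_ge_atTop 1] with k hk
    have h1 : (1 : ℝ) ≤ (Nat.sqrt k : ℝ) := by
      exact_mod_cast Nat.le_sqrt.mpr (by omega : 1 * 1 ≤ k)
    have h2 : ((Nat.sqrt k : ℝ)) * (Nat.sqrt k) ≤ k := by exact_mod_cast Nat.sqrt_le k
    have hk1 : (1 : ℝ) ≤ (k : ℝ) := by exact_mod_cast hk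
    show (Nat.sqrt k : ℝ) / k ≤ 1 / (Nat.sqrt k : ℝ)
    rw [div_le_div_iff₀ (by linarith) (by linarith)]
    nlinarith

set_option maxHeartbeats 1000000 in
/-- Fix `t ≥ 2`. With `AE(k,t)` the maximum of `α_{t-1}(G) - eq_t(G)` over
connected graphs `G` on `k` vertices and `M(k)` the maximum of `α_{t-1}(G)` over connected
graphs on `k` vertices, there is a real `L` with `AE(k,t)/k → L` and `M(k)/k → L`. -/
theorem AE_div_tendsto_iff_max_indep_div_tendsto (t : ℕ) (ht : 2 ≤ t) :
    ∃ L : ℝ,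
      Filter.Tendsto (fun k : ℕ =>
        ((sSup {m : ℤ | ∃ G : SimpleGraph (Fin k), G.Connected ∧
            m = (indepNumT G (t - 1) : ℤ) - (eqNum G t : ℤ)} : ℤ) : ℝ) / (k : ℝ))
        Filter.atTop (nhds L) ∧
      Filter.Tendsto (fun k : ℕ =>
        ((sSup {m : ℕ | ∃ G : SimpleGraph (Fin k), G.Connected ∧
            m = indepNumT G (t - 1)} : ℕ) : ℝ) / (k : ℝ))
        Filter.atTop (nhds L) := by
  classical
  obtain ⟨ℓ, hℓdef⟩ : ∃ ℓ, ℓ = (t + 1) / 2 := ⟨_, rfl⟩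
  have hℓ1 : 1 ≤ ℓ := by omega
  have ht2ℓ : t ≤ 2 * ℓ := by omega
  have h2ℓt : 2 * ℓ ≤ t + 1 := by omega
  have hl0 : (0 : ℝ) < (ℓ : ℝ) := by exact_mod_cast hℓ1
  -- the bounding sequences
  have hHIlim : Filter.Tendsto (fun k : ℕ => 1 / (ℓ : ℝ) + 1 / (k : ℝ))
      Filter.atTop (nhds (1 / (ℓ : ℝ))) := by
    simpa using (tendsto_const_nhds : Filter.Tendsto (fun _ : ℕ => 1 / (ℓ : ℝ)) Filter.atTop
      (nhds (1 / (ℓ : ℝ)))).add tendsto_one_div_atTop_nhds_zero_nat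
  have hLOlim : Filter.Tendsto
      (fun k : ℕ => 1 / (ℓ : ℝ) - (5 * (Nat.sqrt k : ℝ) + 10) / (k : ℝ))
      Filter.atTop (nhds (1 / (ℓ : ℝ))) := by
    have herr : Filter.Tendsto (fun k : ℕ => (5 * (Nat.sqrt k : ℝ) + 10) / (k : ℝ))
        Filter.atTop (nhds 0) := by
      have h1 := (natSqrt_div_tendsto.const_mul 5).add
        (tendsto_one_div_atTop_nhds_zero_nat.const_mul 10)
      have h2 : ∀ k : ℕ, 5 * ((Nat.sqrt k : ℝ) / k) + 10 * (1 / (k : ℝ))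
          = (5 * (Nat.sqrt k : ℝ) + 10) / (k : ℝ) := by
        intro k
        rw [add_div, mul_div_assoc, mul_one_div]
      simp only [h2] at h1
      simpa using h1
    simpa using tendsto_const_nhds.sub herr
  -- the main bounds
  have hbound : ∀ k : ℕ, (ℓ + 1) * (ℓ + 1) ≤ k →
      (1 / (ℓ : ℝ) - (5 * (Nat.sqrt k : ℝ) + 10) / (k : ℝ) ≤
        ((sSup {m : ℤ | ∃ G : SimpleGraph (Fin k), G.Connected ∧
            m = (indepNumT G (t - 1) : ℤ) - (eqNum G t : ℤ)} : ℤ) : ℝ) / (k : ℝ)) ∧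
      (((sSup {m : ℤ | ∃ G : SimpleGraph (Fin k), G.Connected ∧
            m = (indepNumT G (t - 1) : ℤ) - (eqNum G t : ℤ)} : ℤ) : ℝ) / (k : ℝ) ≤
        1 / (ℓ : ℝ) + 1 / (k : ℝ)) ∧
      (1 / (ℓ : ℝ) - (5 * (Nat.sqrt k : ℝ) + 10) / (k : ℝ) ≤
        ((sSup {m : ℕ | ∃ G : SimpleGraph (Fin k), G.Connected ∧
            m = indepNumT G (t - 1)} : ℕ) : ℝ) / (k : ℝ)) ∧
      (((sSup {m : ℕ | ∃ G : SimpleGraph (Fin k), G.Connected ∧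
            m = indepNumT G (t - 1)} : ℕ) : ℝ) / (k : ℝ) ≤
        1 / (ℓ : ℝ) + 1 / (k : ℝ)) := by
    intro k hK
    have hk1 : 1 ≤ k := by
      have := Nat.mul_le_mul (show 1 ≤ ℓ + 1 by omega) (show 1 ≤ ℓ + 1 by omega)
      omega
    have hk0 : (0 : ℝ) < (k : ℝ) := by exact_mod_cast hk1
    obtain ⟨hs1, hsr, hs3, hs4⟩ :=
      numerics ℓ k (Nat.sqrt k) (k - Nat.sqrt k) ((k - Nat.sqrt k) / ℓ)
        (Nat.sqrt ((k - Nat.sqrt k) / ℓ)) hℓ1 hK rfl rfl rfl rfl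
    obtain ⟨s, hsdef⟩ : ∃ s, s = Nat.sqrt ((k - Nat.sqrt k) / ℓ) := ⟨_, rfl⟩
    rw [← hsdef] at hs1 hsr hs3 hs4
    obtain ⟨G, hG, hind, heq⟩ :=
      exists_good_graph t ℓ s (k - s * s * ℓ) k ht hℓ1 ht2ℓ h2ℓt hs1 (by omega) (by omega)
    -- facts about M
    have hMbdd : BddAbove {m : ℕ | ∃ G : SimpleGraph (Fin k), G.Connected ∧
        m = indepNumT G (t - 1)} := by
      refine ⟨k, ?_⟩
      rintro n ⟨G', -, rfl⟩
      simpa using indepNumT_le_card G' (t - 1)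
    have hMmem : indepNumT G (t - 1) ∈ {m : ℕ | ∃ G : SimpleGraph (Fin k), G.Connected ∧
        m = indepNumT G (t - 1)} := ⟨G, hG, rfl⟩
    obtain ⟨M, hMdef⟩ : ∃ M, M = sSup {m : ℕ | ∃ G : SimpleGraph (Fin k), G.Connected ∧
        m = indepNumT G (t - 1)} := ⟨_, rfl⟩
    have hMge : s * s ≤ M := le_trans hind (hMdef ▸ le_csSup hMbdd hMmem)
    have hMle : M * ℓ ≤ k + ℓ := by
      have hM2 : M ≤ (k + ℓ) / ℓ := by
        rw [hMdef]
        refine csSup_le ⟨_, hMmem⟩ ?_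
        rintro n ⟨G', hG', rfl⟩
        rw [Nat.le_div_iff_mul_le hℓ1]
        have := indepNumT_mul_le (G := G') hG' hℓ1 h2ℓt ht
        simpa using this
      calc M * ℓ ≤ ((k + ℓ) / ℓ) * ℓ := Nat.mul_le_mul_right ℓ hM2
        _ ≤ k + ℓ := Nat.div_mul_le_self _ _
    -- facts about A
    have hAbdd : BddAbove {m : ℤ | ∃ G : SimpleGraph (Fin k), G.Connected ∧
        m = (indepNumT G (t - 1) : ℤ) - (eqNum G t : ℤ)} := by
      refine ⟨(k : ℤ), ?_⟩
      rintro n ⟨G', -, rfl⟩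
      have h1 := indepNumT_le_card G' (t - 1)
      simp only [Fintype.card_fin] at h1
      have h2 : (0 : ℤ) ≤ (eqNum G' t : ℤ) := Int.natCast_nonneg _
      omega
    have hAmem : ((indepNumT G (t - 1) : ℤ) - (eqNum G t : ℤ)) ∈
        {m : ℤ | ∃ G : SimpleGraph (Fin k), G.Connected ∧
          m = (indepNumT G (t - 1) : ℤ) - (eqNum G t : ℤ)} := ⟨G, hG, rfl⟩
    obtain ⟨A, hAdef⟩ : ∃ A, A = sSup {m : ℤ | ∃ G : SimpleGraph (Fin k), G.Connected ∧
        m = (indepNumT G (t - 1) : ℤ) - (eqNum G t : ℤ)} := ⟨_, rfl⟩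
    have hAge : ((s * s : ℕ) : ℤ) - ((s + 4 : ℕ) : ℤ) ≤ A := by
      rw [hAdef]
      refine le_trans ?_ (le_csSup hAbdd hAmem)
      exact sub_le_sub (Int.ofNat_le.mpr hind) (Int.ofNat_le.mpr heq)
    have hAleM : A ≤ (M : ℤ) := by
      rw [hAdef, hMdef]
      refine csSup_le ⟨_, hAmem⟩ ?_
      rintro n ⟨G', hG', rfl⟩
      have h1 : indepNumT G' (t - 1) ≤ sSup {m : ℕ | ∃ G : SimpleGraph (Fin k), G.Connected ∧
          m = indepNumT G (t - 1)} := le_csSup hMbdd ⟨G', hG', rfl⟩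
      have h2 : (0 : ℤ) ≤ (eqNum G' t : ℤ) := Int.natCast_nonneg _
      omega
    rw [← hAdef, ← hMdef]
    -- real versions
    have hsrR : (s : ℝ) ≤ (Nat.sqrt k : ℝ) := by exact_mod_cast hsr
    have hc1 : (k : ℝ) ≤ (s : ℝ) * (s : ℝ) * (ℓ : ℝ) +
        3 * ((ℓ : ℝ) * (Nat.sqrt k : ℝ)) + 2 * (ℓ : ℝ) := by exact_mod_cast hs4
    have hc2 : (s : ℝ) * (s : ℝ) - ((s : ℝ) + 4) ≤ (A : ℝ) := by
      exact_mod_cast hAge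
    have hc3 : (A : ℝ) ≤ (M : ℝ) := by exact_mod_cast hAleM
    have hc4 : (M : ℝ) * (ℓ : ℝ) ≤ (k : ℝ) + (ℓ : ℝ) := by exact_mod_cast hMle
    have hc5 : (s : ℝ) * (s : ℝ) ≤ (M : ℝ) := by exact_mod_cast hMge
    have hsq0 : (0 : ℝ) ≤ (Nat.sqrt k : ℝ) := by positivity
    have keyA : (k : ℝ) ≤ (A : ℝ) * (ℓ : ℝ) + (5 * (Nat.sqrt k : ℝ) + 10) * (ℓ : ℝ) := by
      linarith [mul_le_mul_of_nonneg_right hc2 hl0.le,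
        mul_le_mul_of_nonneg_right hsrR hl0.le, hc1,
        mul_nonneg hsq0 hl0.le, hl0.le]
    have keyM : (k : ℝ) ≤ (M : ℝ) * (ℓ : ℝ) + (5 * (Nat.sqrt k : ℝ) + 10) * (ℓ : ℝ) := by
      linarith [mul_le_mul_of_nonneg_right hc5 hl0.le,
        mul_le_mul_of_nonneg_right hsrR hl0.le, hc1,
        mul_nonneg hsq0 hl0.le, hl0.le]
    have hupA : (A : ℝ) / (k : ℝ) ≤ 1 / (ℓ : ℝ) + 1 / (k : ℝ) := by
      rw [div_add_div _ _ (ne_of_gt hl0) (ne_of_gt hk0), div_le_div_iff₀ hk0 (by positivity)]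
      linarith [mul_le_mul_of_nonneg_right (mul_le_mul_of_nonneg_right hc3 hl0.le) hk0.le,
        mul_le_mul_of_nonneg_right hc4 hk0.le]
    have hupM : (M : ℝ) / (k : ℝ) ≤ 1 / (ℓ : ℝ) + 1 / (k : ℝ) := by
      rw [div_add_div _ _ (ne_of_gt hl0) (ne_of_gt hk0), div_le_div_iff₀ hk0 (by positivity)]
      linarith [mul_le_mul_of_nonneg_right hc4 hk0.le, mul_le_mul_of_nonneg_right hc3 hl0.le]
    have hloA : 1 / (ℓ : ℝ) - (5 * (Nat.sqrt k : ℝ) + 10) / (k : ℝ) ≤ (A : ℝ) / (k : ℝ) := by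
      rw [sub_le_iff_le_add, ← add_div, div_le_div_iff₀ hl0 hk0]
      linarith [keyA]
    have hloM : 1 / (ℓ : ℝ) - (5 * (Nat.sqrt k : ℝ) + 10) / (k : ℝ) ≤ (M : ℝ) / (k : ℝ) := by
      rw [sub_le_iff_le_add, ← add_div, div_le_div_iff₀ hl0 hk0]
      linarith [keyM]
    exact ⟨hloA, hupA, hloM, hupM⟩
  refine ⟨1 / (ℓ : ℝ), ?_, ?_⟩
  · apply tendsto_of_tendsto_of_tendsto_of_le_of_le' hLOlim hHIlim
    · filter_upwards [Filter.eventually_ge_atTop ((ℓ + 1) * (ℓ + 1))] with k hk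
      exact (hbound k hk).1
    · filter_upwards [Filter.eventually_ge_atTop ((ℓ + 1) * (ℓ + 1))] with k hk
      exact (hbound k hk).2.1
  · apply tendsto_of_tendsto_of_tendsto_of_le_of_le' hLOlim hHIlim
    · filter_upwards [Filter.eventually_ge_atTop ((ℓ + 1) * (ℓ + 1))] with k hk
      exact (hbound k hk).2.2.1
    · filter_upwards [Filter.eventually_ge_atTop ((ℓ + 1) * (ℓ + 1))] with k hk
      exact (hbound k hk).2.2.2
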